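/- Let K = {x_1, …, x_k} be a coloured k-clique with k ≥ 3. If the weight of the Hamiltonian cycle x_1 → x_2 → … → x_k → x_1 is strictly less than 2m + 4 − k, then this weight equals m + 2 − k. -/
import Mathlib


namespace MutClassAn

open Finset

variable {V : Type} [Fintype V] [DecidableEq V]

/-- `M i j c` is the number of arrows from `i` to `j` of colour `c`.
An `m`-coloured quiver has no loops, is monochromatic and skew-symmetric
(`c.rev = m - c` in `Fin (m+1)`). -/
def IsColouredQuiver {m : ℕ} (M : V → V → Fin (m + 1) → ℕ) : Prop :=
  (∀ i c, M i i c = 0) ∧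
  (∀ i j c c', M i j c ≠ 0 → M i j c' ≠ 0 → c = c') ∧
  (∀ i j c, M i j c = M j i c.rev)

/-- A coloured quiver is simple if there is at most one arrow between any two
vertices in each direction. -/
def IsSimpleCQ {m : ℕ} (M : V → V → Fin (m + 1) → ℕ) : Prop :=
  ∀ i j : V, (∑ c, M i j c) ≤ 1

/-- Adjacency in the underlying graph. -/
def CQAdj {m : ℕ} (M : V → V → Fin (m + 1) → ℕ) (i j : V) : Prop :=
  i ≠ j ∧ ∃ c, M i j c ≠ 0

/-- The colour of the (unique, for simple quivers) arrow from `i` to `j`. -/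
def colourOf {m : ℕ} (M : V → V → Fin (m + 1) → ℕ) (i j : V) : ℕ :=
  ∑ c : Fin (m + 1), M i j c * c.val

/-- Buan–Thomas coloured quiver mutation at the vertex `j`. -/
def mutate {m : ℕ} (M : V → V → Fin (m + 1) → ℕ) (j : V) :
    V → V → Fin (m + 1) → ℕ := fun i k c =>
  if k = j then M i k (c + 1)
  else if i = j then M i k (c - 1)
  else ((M i k c : ℤ) - ∑ t ∈ Finset.univ.filter (fun t => t ≠ c), (M i k t : ℤ)
      + ((M i j c : ℤ) - (M i j (c - 1) : ℤ)) * (M j k 0 : ℤ)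
      + (M i j (Fin.last m) : ℤ) * ((M j k c : ℤ) - (M j k (c + 1) : ℤ))).toNat

/-- Mutation equivalence: the equivalence relation generated by single mutations. -/
def MutEquiv {m : ℕ} (M M' : V → V → Fin (m + 1) → ℕ) : Prop :=
  Relation.EqvGen (fun A B => ∃ v, mutate A v = B) M M'

/-- A hole is an induced cycle of length at least `4` in the underlying graph. -/
def HasHole {m : ℕ} (M : V → V → Fin (m + 1) → ℕ) : Prop :=
  ∃ k : ℕ, 4 ≤ k ∧ ∃ x : ZMod k → V, Function.Injective x ∧
    (∀ i, CQAdj M (x i) (x (i + 1))) ∧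
    ∀ i j : ZMod k, i ≠ j → j ≠ i + 1 → i ≠ j + 1 → ¬ CQAdj M (x i) (x j)

/-- A clique: a set of pairwise adjacent vertices. -/
def IsCliqueCQ {m : ℕ} (M : V → V → Fin (m + 1) → ℕ) (S : Set V) : Prop :=
  S.Pairwise (CQAdj M)

/-- The set of neighbours of a vertex. -/
def nbrs {m : ℕ} (M : V → V → Fin (m + 1) → ℕ) (v : V) : Set V :=
  {u | CQAdj M v u}

/-- Connectedness of the underlying graph. -/
def CQConnected {m : ℕ} (M : V → V → Fin (m + 1) → ℕ) : Prop :=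
  ∀ u w : V, Relation.ReflTransGen (CQAdj M) u w

/-- Condition (1) of the class `𝒬ₙᵐ`: the neighbourhood of every vertex is covered
by two cliques of sizes `r, k ≤ m + 2` with `r + k = z + 2`, with no arrows between
the two cliques away from the vertex. -/
def Cond1 {m : ℕ} (M : V → V → Fin (m + 1) → ℕ) : Prop :=
  ∀ v : V, (nbrs M v).Nonempty →
    ∃ R K : Finset V, v ∈ R ∧ v ∈ K ∧ IsCliqueCQ M ↑R ∧ IsCliqueCQ M ↑K ∧
      R.card + K.card = (nbrs M v).ncard + 2 ∧ R.card ≤ m + 2 ∧ K.card ≤ m + 2 ∧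
      (∀ u ∈ nbrs M v, u ∈ R ∨ u ∈ K) ∧
      ∀ a ∈ R, a ≠ v → ∀ b ∈ K, b ≠ v → ¬ CQAdj M a b

/-- Condition (2) of the class `𝒬ₙᵐ`: every triangle inside a clique has colour
sum `m - 1` along one of its two orientations (sums taken in `ℤ`). -/
def Cond2 {m : ℕ} (M : V → V → Fin (m + 1) → ℕ) : Prop :=
  ∀ v1 v2 v3 : V, v1 ≠ v2 → v2 ≠ v3 → v1 ≠ v3 →
    CQAdj M v1 v2 → CQAdj M v2 v3 → CQAdj M v1 v3 →
    ((colourOf M v2 v1 : ℤ) + (colourOf M v1 v3 : ℤ) + (colourOf M v3 v2 : ℤ)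
        = (m : ℤ) - 1 ∨
      ((m : ℤ) - colourOf M v2 v1) + ((m : ℤ) - colourOf M v1 v3)
          + ((m : ℤ) - colourOf M v3 v2) = (m : ℤ) - 1)

/-- Membership in the class `𝒬ₙᵐ` (`n` being the cardinality of the vertex set). -/
def MemQClass {m : ℕ} (M : V → V → Fin (m + 1) → ℕ) : Prop :=
  IsColouredQuiver M ∧ IsSimpleCQ M ∧ CQConnected M ∧ ¬ HasHole M ∧ Cond1 M ∧ Cond2 M

/-- An `Aₙ`-quiver: the underlying graph is the path graph on the vertex set. -/
def IsAnQuiver {m : ℕ} (M : V → V → Fin (m + 1) → ℕ) : Prop :=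
  ∃ e : Fin (Fintype.card V) ≃ V,
    ∀ i j : Fin (Fintype.card V),
      CQAdj M (e i) (e j) ↔ (i.val + 1 = j.val ∨ j.val + 1 = i.val)

/-- The coloured quiver on `Fin n` whose underlying graph is the path
`0 — 1 — ⋯ — (n-1)`, with the arrow `j+1 → j` coloured `c j` and the arrow
`j → j+1` coloured `m - c j`. -/
def pathQuiver (m n : ℕ) (c : ℕ → Fin (m + 1)) :
    Fin n → Fin n → Fin (m + 1) → ℕ := fun i j d =>
  if j.val + 1 = i.val ∧ d = c j.val then 1
  else if i.val + 1 = j.val ∧ d = (c i.val).rev then 1 else 0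

/-- Delete all arrows between vertices of `S`. -/
def deleteArrows {m : ℕ} (M : V → V → Fin (m + 1) → ℕ) (S : Finset V) :
    V → V → Fin (m + 1) → ℕ := fun i j c =>
  if i ∈ S ∧ j ∈ S then 0 else M i j c

/-- The connected component of `u` is an `A_k`-quiver (a path) for some `k ≥ 1`. -/
def ComponentIsPath {m : ℕ} (M : V → V → Fin (m + 1) → ℕ) (u : V) : Prop :=
  ∃ (k : ℕ) (x : Fin k → V), 1 ≤ k ∧ Function.Injective x ∧
    Set.range x = {w | Relation.ReflTransGen (CQAdj M) u w} ∧
    ∀ i j : Fin k, CQAdj M (x i) (x j) ↔ (i.val + 1 = j.val ∨ j.val + 1 = i.val)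

/-- An almost extremal clique: deleting its arrows leaves a connected component
which is an `A_k`-quiver for some `k ≥ 1`. -/
def AlmostExtremalClique {m : ℕ} (M : V → V → Fin (m + 1) → ℕ) (S : Finset V) : Prop :=
  IsCliqueCQ M ↑S ∧ ∃ u : V, ComponentIsPath (deleteArrows M S) u

/-- An extremal clique: deleting its arrows leaves a single-vertex component. -/
def ExtremalClique {m : ℕ} (M : V → V → Fin (m + 1) → ℕ) (S : Finset V) : Prop :=
  IsCliqueCQ M ↑S ∧
    ∃ u : V, {w | Relation.ReflTransGen (CQAdj (deleteArrows M S)) u w} = {u}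

/-- A coloured clique structure on a vertex type: colours `c i j ∈ {0,…,m}` with
skew-symmetry `c j i = m - c i j` and the triangle condition. -/
def IsCliqueColouring (m : ℕ) {W : Type} (c : W → W → ℕ) : Prop :=
  (∀ i j : W, i ≠ j → c i j ≤ m) ∧
  (∀ i j : W, i ≠ j → c i j + c j i = m) ∧
  ∀ i j l : W, i ≠ j → j ≠ l → i ≠ l →
    ((c i j : ℤ) + (c j l : ℤ) + (c l i : ℤ) = (m : ℤ) - 1 ∨
      (c i j : ℤ) + (c j l : ℤ) + (c l i : ℤ) = 2 * (m : ℤ) + 1)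

/-- Cyclic successor in `Fin k`. -/
def cyc {k : ℕ} (i : Fin k) : Fin k :=
  ⟨(i.val + 1) % k, Nat.mod_lt _ i.pos⟩

/-- The weight of the Hamiltonian cycle `x 0 → x 1 → ⋯ → x (k-1) → x 0`:
the sum of the colours of its arrows. -/
def cycleWeight {W : Type} (c : W → W → ℕ) {k : ℕ} (x : Fin k → W) : ℤ :=
  ∑ i : Fin k, (c (x i) (x (cyc i)) : ℤ)

/-- The Hamiltonian cycle on `k+1` vertices obtained from the cycle
`x 0 → ⋯ → x (k-1) → x 0` by inserting the vertex `x (Fin.last k)`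
immediately after `x j`. -/
def insertAfter {W : Type} {k : ℕ} (x : Fin (k + 1) → W) (j : Fin k) :
    Fin (k + 1) → W := fun i =>
  if i = 0 then x (Fin.last k)
  else x (Fin.castSucc ⟨(j.val + i.val) % k, Nat.mod_lt _ j.pos⟩)

/-- If the weight of a Hamiltonian cycle of a coloured `k`-clique is strictly less
than `2m + 4 - k`, then it equals `m + 2 - k`. -/
theorem cycleWeight_eq_of_lt (m k : ℕ) (hm : 1 ≤ m) (hk : 3 ≤ k)
    (W : Type) [Fintype W] (hcard : Fintype.card W = k)
    (c : W → W → ℕ) (hc : IsCliqueColouring m c)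
    (x : Fin k → W) (hx : Function.Bijective x)
    (hlt : cycleWeight c x < 2 * (m : ℤ) + 4 - k) :
    cycleWeight c x = (m : ℤ) + 2 - k := by
  obtain ⟨hle, hskew, htri⟩ := hc
  have hinj := hx.injective
  haveI : NeZero k := ⟨by omega⟩
  have hnonneg : (0:ℤ) ≤ cycleWeight c x :=
    Finset.sum_nonneg fun i _ => Int.natCast_nonneg _
  have hm2 : ((m : ℕ) : ZMod (m + 2)) = -2 := by
    have h := ZMod.natCast_self (m + 2)
    push_cast at h
    linear_combination h
  set g : Fin k → ZMod (m+2) :=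
    fun i => if i = 0 then -1 else (c (x 0) (x i) : ZMod (m+2)) with hg
  have hcycval : ∀ i : Fin k, (cyc i).val = (i.val + 1) % k := fun i => rfl
  have hcycne : ∀ i : Fin k, cyc i ≠ i := by
    intro i h
    have hv := congrArg Fin.val h
    rw [hcycval] at hv
    rcases Nat.lt_or_ge (i.val + 1) k with h' | h'
    · rw [Nat.mod_eq_of_lt h'] at hv; omega
    · have hik : i.val + 1 = k := by have := i.isLt; omega
      rw [hik, Nat.mod_self] at hv
      omega
  have key : ∀ i : Fin k,
      ((c (x i) (x (cyc i)) : ℕ) : ZMod (m+2)) = g (cyc i) - g i - 1 := by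
    intro i
    have hne : x i ≠ x (cyc i) := fun h => hcycne i (hinj h).symm
    by_cases hi0 : i = 0
    · have hj0 : cyc i ≠ 0 := by
        intro h
        have hv := congrArg Fin.val h
        rw [hcycval, hi0] at hv
        have h1 : (0 + 1) % k = 1 := Nat.mod_eq_of_lt (by omega)
        simp [h1] at hv
      subst hi0
      simp [hg, hj0]
    · by_cases hj0 : cyc i = 0
      · have hxne : x 0 ≠ x i := fun h => hi0 (hinj h).symm
        have hs := hskew (x 0) (x i) hxne
        have hsR := congrArg (fun n : ℕ => (n : ZMod (m+2))) hs
        push_cast at hsR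
        rw [hj0]
        simp only [hg, if_pos rfl, if_neg hi0]
        linear_combination hsR + hm2
      · have h2 : x (cyc i) ≠ x 0 := fun h => hj0 (hinj h)
        have h3 : x i ≠ x 0 := fun h => hi0 (hinj h)
        have ht := htri (x i) (x (cyc i)) (x 0) hne h2 h3
        have hs := hskew (x 0) (x (cyc i)) h2.symm
        have hsR := congrArg (fun n : ℕ => (n : ZMod (m+2))) hs
        push_cast at hsR
        simp only [hg, if_neg hi0, if_neg hj0]
        rcases ht with ht | ht
        · have htR := congrArg (fun z : ℤ => (z : ZMod (m+2))) ht
          push_cast at htR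
          linear_combination htR - hsR
        · have htR := congrArg (fun z : ℤ => (z : ZMod (m+2))) ht
          push_cast at htR
          linear_combination htR - hsR + hm2
  have hone : (1 : Fin k).val = 1 := by
    rw [Fin.val_one']
    exact Nat.mod_eq_of_lt (by omega)
  have hcycadd : ∀ i : Fin k, cyc i = i + 1 := by
    intro i
    apply Fin.ext
    rw [hcycval, Fin.val_add, hone]
  have hsum : ∑ i : Fin k, g (cyc i) = ∑ i : Fin k, g i := by
    simp only [hcycadd]
    exact Fintype.sum_equiv (Equiv.addRight (1 : Fin k)) _ _ (fun i => rfl)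
  have hmodeq : ((cycleWeight c x - ((m:ℤ) + 2 - k) : ℤ) : ZMod (m+2)) = 0 := by
    have hw : ((cycleWeight c x : ℤ) : ZMod (m+2))
        = ∑ i : Fin k, ((c (x i) (x (cyc i)) : ℕ) : ZMod (m+2)) := by
      unfold cycleWeight
      push_cast
      rfl
    rw [Int.cast_sub, hw]
    simp only [key]
    rw [Finset.sum_sub_distrib, Finset.sum_sub_distrib, hsum, Finset.sum_const,
      Finset.card_univ, Fintype.card_fin]
    push_cast
    linear_combination -hm2
  have hdvd : ((m : ℤ) + 2) ∣ (cycleWeight c x - ((m:ℤ) + 2 - k)) := by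
    have h := (ZMod.intCast_zmod_eq_zero_iff_dvd _ (m+2)).mp hmodeq
    push_cast at h
    exact h
  have hk' : (3 : ℤ) ≤ k := by exact_mod_cast hk
  have habs : |cycleWeight c x - ((m:ℤ) + 2 - k)| < (m:ℤ) + 2 := by
    rw [abs_lt]
    constructor <;> linarith
  have hz := Int.eq_zero_of_abs_lt_dvd hdvd habs
  linarith

end MutClassAn
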